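/- arXiv:1802.07518 — 2 statements merged into one kernel-verified Lean document; each statement's English description precedes it below -/
import Mathlib

section
/- (Sign of the mixed second derivative at the boundary.) Let n = 2 and let u be a convex function, C² up to the boundary in a neighbourhood of a boundary arc {(t, ρ(t))} of Ω ⊂ {x₂ > ρ(x₁)}, with D²u positive definite there, where ρ and ρ* are C¹ functions and the boundary relation ∂₁u(t, ρ(t)) = ρ*(∂₂u(t, ρ(t))) holds identically in t along the arc. If at a point p = (t, ρ(t)) one has ρ'(t) > 0 and (ρ*)'(∂₂u(p)) < 0, then ∂₁∂₂u(p) < 0. -/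
open MeasureTheory Set Filter
open scoped ENNReal Topology

noncomputable section

/-- The partial derivative `∂ᵢ g` of a function `g : ℝⁿ → ℝ`. -/
def pd {n : ℕ} (i : Fin n) (g : EuclideanSpace ℝ (Fin n) → ℝ)
    (x : EuclideanSpace ℝ (Fin n)) : ℝ :=
  fderiv ℝ g x (EuclideanSpace.single i 1)

/-- The point `(a, b) ∈ ℝ²`. -/
def pt2 (a b : ℝ) : EuclideanSpace ℝ (Fin 2) :=
  a • EuclideanSpace.single (0 : Fin 2) (1 : ℝ) + b • EuclideanSpace.single (1 : Fin 2) (1 : ℝ)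

/-- Lemma 5.5 / proof of Lemma 4.8: for a convex function `u` of two
variables which is `C²` up to a boundary arc `{x₂ = ρ(x₁)}` with positive definite
Hessian, satisfying the boundary relation `∂₁u(t, ρ(t)) = ρ*(∂₂u(t, ρ(t)))` along the
arc, at any arc point where `ρ' > 0` and `(ρ*)' < 0` one has `∂₁∂₂u < 0`. -/
theorem statement13 (u : EuclideanSpace ℝ (Fin 2) → ℝ) (ρ ρstar : ℝ → ℝ)
    (hρ : ContDiff ℝ 1 ρ) (hρs : ContDiff ℝ 1 ρstar)
    (U : Set (EuclideanSpace ℝ (Fin 2))) (hU : IsOpen U) (hUconv : Convex ℝ U)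
    (hconv : ConvexOn ℝ U u) (hu : ContDiffOn ℝ 2 u U)
    (a b : ℝ)
    (harc : ∀ t ∈ Ioo a b, pt2 t (ρ t) ∈ U)
    (hpos : ∀ t ∈ Ioo a b,
      (Matrix.of fun i j : Fin 2 => pd i (pd j u) (pt2 t (ρ t))).PosDef)
    (hbdry : ∀ t ∈ Ioo a b, pd 0 u (pt2 t (ρ t)) = ρstar (pd 1 u (pt2 t (ρ t))))
    (t : ℝ) (ht : t ∈ Ioo a b)
    (hρ' : 0 < deriv ρ t)
    (hρs' : deriv ρstar (pd 1 u (pt2 t (ρ t))) < 0) :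
    pd 0 (pd 1 u) (pt2 t (ρ t)) < 0 := by
  set v0 : EuclideanSpace ℝ (Fin 2) := EuclideanSpace.single (0 : Fin 2) (1 : ℝ) with hv0
  set v1 : EuclideanSpace ℝ (Fin 2) := EuclideanSpace.single (1 : Fin 2) (1 : ℝ) with hv1
  -- C² at arc points
  have hC2 : ∀ s ∈ Ioo a b, ContDiffAt ℝ 2 u (pt2 s (ρ s)) := fun s hs =>
    hu.contDiffAt (hU.mem_nhds (harc s hs))
  have hdf : ∀ s ∈ Ioo a b, DifferentiableAt ℝ (fderiv ℝ u) (pt2 s (ρ s)) := fun s hs =>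
    (((hC2 s hs).fderiv_right (m := 1) (by norm_num)).differentiableAt one_ne_zero)
  -- derivative of the first partials
  have hpdj : ∀ s ∈ Ioo a b, ∀ j : Fin 2,
      HasFDerivAt (pd j u)
        ((ContinuousLinearMap.apply ℝ ℝ (EuclideanSpace.single j (1 : ℝ))).comp
          (fderiv ℝ (fderiv ℝ u) (pt2 s (ρ s)))) (pt2 s (ρ s)) := by
    intro s hs j
    exact (ContinuousLinearMap.apply ℝ ℝ
      (EuclideanSpace.single j (1 : ℝ))).hasFDerivAt.comp _ (hdf s hs).hasFDerivAt
  set M := fderiv ℝ (fderiv ℝ u) (pt2 t (ρ t)) with hM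
  -- identify second partials with the second derivative
  have key : ∀ i j : Fin 2, pd i (pd j u) (pt2 t (ρ t))
      = M (EuclideanSpace.single i (1 : ℝ)) (EuclideanSpace.single j (1 : ℝ)) := by
    intro i j
    show fderiv ℝ (pd j u) (pt2 t (ρ t)) (EuclideanSpace.single i (1 : ℝ)) = _
    rw [(hpdj t ht j).fderiv]
    rfl
  -- symmetry of second derivatives
  have hsymm := (hC2 t ht).isSymmSndFDerivAt (n := 2) (by simp [minSmoothness_of_isRCLikeNormedField])
  -- the curve
  have hγ : HasDerivAt (fun s => pt2 s (ρ s)) (v0 + deriv ρ t • v1) t := by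
    unfold pt2
    have h1 : HasDerivAt (fun s : ℝ => s • v0) ((1 : ℝ) • v0) t :=
      (hasDerivAt_id t).smul_const v0
    have h2 : HasDerivAt (fun s : ℝ => ρ s • v1) (deriv ρ t • v1) t :=
      ((hρ.differentiable one_ne_zero t).hasDerivAt).smul_const v1
    have h := h1.add h2
    simp at h
    exact h
  -- derivatives of the partials along the curve
  have hF : ∀ j : Fin 2, HasDerivAt (fun s => pd j u (pt2 s (ρ s)))
      (M v0 (EuclideanSpace.single j (1 : ℝ))
        + deriv ρ t * M v1 (EuclideanSpace.single j (1 : ℝ))) t := by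
    intro j
    have := (hpdj t ht j).comp_hasDerivAt t hγ
    simp [ContinuousLinearMap.comp_apply, ContinuousLinearMap.apply_apply,
      map_add, _root_.map_smul, smul_eq_mul, ← hM] at this
    exact this
  -- differentiate the boundary relation
  have heq : (fun s => pd 0 u (pt2 s (ρ s)))
      =ᶠ[𝓝 t] fun s => ρstar (pd 1 u (pt2 s (ρ s))) :=
    eventually_of_mem (isOpen_Ioo.mem_nhds ht) hbdry
  have hcomp : HasDerivAt (fun s => ρstar (pd 1 u (pt2 s (ρ s))))
      (deriv ρstar (pd 1 u (pt2 t (ρ t))) *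
        (M v0 v1 + deriv ρ t * M v1 v1)) t :=
    ((hρs.differentiable one_ne_zero _).hasDerivAt).comp t (hF 1)
  have hrel : M v0 v0 + deriv ρ t * M v1 v0
      = deriv ρstar (pd 1 u (pt2 t (ρ t))) * (M v0 v1 + deriv ρ t * M v1 v1) :=
    ((hF 0).congr_of_eventuallyEq heq.symm).unique hcomp
  -- diagonal entries are positive
  have h00 : 0 < M v0 v0 := by
    have h := (hpos t ht).dotProduct_mulVec_pos (x := ![1, 0]) (by
      intro h
      have := congrFun h 0
      norm_num at this)
    simpa [dotProduct, Matrix.mulVec, Fin.sum_univ_two, Matrix.of_apply, Matrix.vecHead, Matrix.vecTail,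
      Matrix.cons_val_zero, Matrix.cons_val_one, Matrix.head_cons, key 0 0] using h
  have h11 : 0 < M v1 v1 := by
    have h := (hpos t ht).dotProduct_mulVec_pos (x := ![0, 1]) (by
      intro h
      have := congrFun h 1
      norm_num at this)
    simpa [dotProduct, Matrix.mulVec, Fin.sum_univ_two, Matrix.of_apply, Matrix.vecHead, Matrix.vecTail,
      Matrix.cons_val_zero, Matrix.cons_val_one, Matrix.head_cons, key 1 1] using h
  have hBsymm : M v1 v0 = M v0 v1 := hsymm v1 v0
  rw [key 0 1]
  by_contra hB
  push_neg at hB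
  rw [hBsymm] at hrel
  nlinarith [mul_pos hρ' h11, mul_nonneg hρ'.le hB,
    mul_neg_of_neg_of_pos hρs' (by nlinarith : (0:ℝ) < M v0 v1 + deriv ρ t * M v1 v1)]
end
end

section
/- (Auxiliary function solves the linearized equation.) Let u be a C³ convex function on an open set in ℝⁿ with positive definite Hessian satisfying det D²u = c for a constant c > 0. Let (U^{ij}) denote the cofactor matrix of D²u, and for any constant K define w = ∂₁u + K(u − (n/2) x₁ ∂₁u). Then Σ_{i,j} U^{ij} ∂_i∂_j w = 0 on that open set. -/
open MeasureTheory Set Filter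
open scoped ENNReal Topology

noncomputable section

/-- The Hessian matrix `(∂ᵢ∂ⱼ u)(x)`. -/
def hessMatrix {n : ℕ} (u : EuclideanSpace ℝ (Fin n) → ℝ)
    (x : EuclideanSpace ℝ (Fin n)) : Matrix (Fin n) (Fin n) ℝ :=
  Matrix.of fun i j => pd i (pd j u) x

/-! ### Auxiliary lemmas -/

section Aux

/-- The determinant, as a continuous multilinear map in the rows. -/
def detCML (m : ℕ) : ContinuousMultilinearMap ℝ (fun _ : Fin m => (Fin m → ℝ)) ℝ :=
  (Matrix.detRowAlternating : (Fin m → ℝ) [⋀^Fin m]→ₗ[ℝ] ℝ).toMultilinearMap.mkContinuous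
    (Fintype.card (Equiv.Perm (Fin m))) (by
      intro r
      have h1 : (Matrix.detRowAlternating (R := ℝ) (n := Fin m)).toMultilinearMap r
          = (Matrix.of r).det := rfl
      rw [h1, Matrix.det_apply]
      refine (norm_sum_le _ _).trans ?_
      have hterm : ∀ σ : Equiv.Perm (Fin m),
          ‖Equiv.Perm.sign σ • ∏ i, Matrix.of r (σ i) i‖ ≤ ∏ i, ‖r i‖ := by
        intro σ
        have h2 : ‖Equiv.Perm.sign σ • ∏ i, Matrix.of r (σ i) i‖
            = ‖∏ i, Matrix.of r (σ i) i‖ := by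
          rcases Int.units_eq_one_or (Equiv.Perm.sign σ) with h | h <;>
            simp [h, Units.smul_def]
        rw [h2, norm_prod]
        calc ∏ i, ‖Matrix.of r (σ i) i‖ ≤ ∏ i, ‖r (σ i)‖ := by
              refine Finset.prod_le_prod (fun i _ => norm_nonneg _) (fun i _ => ?_)
              exact norm_le_pi_norm (r (σ i)) i
          _ = ∏ i, ‖r i‖ := Equiv.prod_comp σ (fun i => ‖r i‖)
      calc ∑ σ : Equiv.Perm (Fin m), ‖Equiv.Perm.sign σ • ∏ i, Matrix.of r (σ i) i‖
          ≤ ∑ _σ : Equiv.Perm (Fin m), ∏ i, ‖r i‖ :=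
            Finset.sum_le_sum (fun σ _ => hterm σ)
        _ = (Fintype.card (Equiv.Perm (Fin m)) : ℝ) * ∏ i, ‖r i‖ := by
            rw [Finset.sum_const, Finset.card_univ, nsmul_eq_mul])

lemma detCML_apply {m : ℕ} (r : Fin m → (Fin m → ℝ)) : detCML m r = (Matrix.of r).det := by
  rw [detCML, MultilinearMap.coe_mkContinuous]; rfl

lemma det_updateRow_eq {m : ℕ} (M : Matrix (Fin m) (Fin m) ℝ) (i : Fin m) (b : Fin m → ℝ) :
    (M.updateRow i b).det = ∑ j, M.adjugate j i * b j := by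
  have h1 : M.updateRow i b = Matrix.transpose ((Matrix.transpose M).updateCol i b) := by
    rw [← Matrix.updateRow_transpose, Matrix.transpose_transpose]
  rw [h1, Matrix.det_transpose, ← Matrix.cramer_apply, Matrix.cramer_eq_adjugate_mulVec,
    Matrix.mulVec, dotProduct]
  congr 1; ext j
  rw [← Matrix.adjugate_transpose, Matrix.transpose_apply]

/-- Jacobi's formula, in the form needed here: if a matrix-valued map has differentiable
entries and locally constant determinant, then `∑ adjᵀ ⬝ (∂ᵥ entries) = 0`. -/
lemma jacobi_zero {m : ℕ} {A : EuclideanSpace ℝ (Fin m) → Matrix (Fin m) (Fin m) ℝ}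
    {x : EuclideanSpace ℝ (Fin m)} {c : ℝ}
    (hA : ∀ i j, DifferentiableAt ℝ (fun y => A y i j) x)
    (hconst : (fun y => (A y).det) =ᶠ[𝓝 x] fun _ => c)
    (v : EuclideanSpace ℝ (Fin m)) :
    ∑ i, ∑ j, (A x).adjugate j i * fderiv ℝ (fun y => A y i j) x v = 0 := by
  classical
  set g : Fin m → EuclideanSpace ℝ (Fin m) → (Fin m → ℝ) := fun i y => fun j => A y i j
    with hgdef
  set g' : Fin m → EuclideanSpace ℝ (Fin m) →L[ℝ] (Fin m → ℝ) :=
    fun i => ContinuousLinearMap.pi (fun j => fderiv ℝ (fun y => A y i j) x) with hg'def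
  have hg : ∀ i, HasFDerivAt (g i) (g' i) x := fun i =>
    hasFDerivAt_pi.2 fun j => (hA i j).hasFDerivAt
  have hD := HasFDerivAt.multilinear_comp (detCML m) hg
  have heq : (fun y => detCML m (fun i => g i y)) = fun y => (A y).det := by
    funext y; rw [detCML_apply]; rfl
  rw [heq] at hD
  have hzero : fderiv ℝ (fun y => (A y).det) x = 0 := by
    rw [hconst.fderiv_eq]; exact fderiv_const_apply c
  have hDez : (∑ i, ((detCML m).toContinuousLinearMap (fun j => g j x) i).comp (g' i)) = 0 := by
    rw [← hD.fderiv, hzero]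
  have hDv := congrFun (congrArg
    (fun (L : EuclideanSpace ℝ (Fin m) →L[ℝ] ℝ) => (L : EuclideanSpace ℝ (Fin m) → ℝ)) hDez) v
  simp only [ContinuousLinearMap.coe_sum', Finset.sum_apply, ContinuousLinearMap.coe_comp',
    Function.comp_apply, ContinuousLinearMap.zero_apply] at hDv
  rw [← hDv]
  refine Finset.sum_congr rfl fun i _ => ?_
  have h1 : ((detCML m).toContinuousLinearMap (fun j => g j x) i) (g' i v)
      = ((A x).updateRow i (fun j => fderiv ℝ (fun y => A y i j) x v)).det := rfl
  rw [h1, det_updateRow_eq]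

variable {m : ℕ} {f : EuclideanSpace ℝ (Fin m) → ℝ} {x : EuclideanSpace ℝ (Fin m)}

lemma pd_congr {i : Fin m} {g : EuclideanSpace ℝ (Fin m) → ℝ} (h : f =ᶠ[𝓝 x] g) :
    pd i f x = pd i g x := by
  unfold pd; rw [h.fderiv_eq]

lemma HasFDerivAt.pd_eq {f' : EuclideanSpace ℝ (Fin m) →L[ℝ] ℝ} (h : HasFDerivAt f f' x)
    (i : Fin m) : pd i f x = f' (EuclideanSpace.single i 1) := by
  unfold pd; rw [h.fderiv]

lemma contDiffAt_pd {k n : WithTop ℕ∞} (hf : ContDiffAt ℝ n f x) (h : k + 1 ≤ n) (j : Fin m) :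
    ContDiffAt ℝ k (pd j f) x :=
  (hf.fderiv_right h).clm_apply contDiffAt_const

lemma pd_pd_eq (hf : ContDiffAt ℝ 2 f x) (i j : Fin m) :
    pd i (pd j f) x
      = fderiv ℝ (fderiv ℝ f) x (EuclideanSpace.single i 1) (EuclideanSpace.single j 1) := by
  have hd : DifferentiableAt ℝ (fderiv ℝ f) x :=
    (hf.fderiv_right (le_refl 2 : (1:WithTop ℕ∞) + 1 ≤ 2)).differentiableAt one_ne_zero
  have h1 : HasFDerivAt (pd j f)
      ((fderiv ℝ f x).comp (0 : EuclideanSpace ℝ (Fin m) →L[ℝ] EuclideanSpace ℝ (Fin m))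
        + (fderiv ℝ (fderiv ℝ f) x).flip (EuclideanSpace.single j 1)) x :=
    hd.hasFDerivAt.clm_apply (hasFDerivAt_const _ _)
  rw [h1.pd_eq i]; simp

lemma pd_comm (hf : ContDiffAt ℝ 2 f x) (i j : Fin m) :
    pd i (pd j f) x = pd j (pd i f) x := by
  rw [pd_pd_eq hf i j, pd_pd_eq hf j i]
  exact (hf.isSymmSndFDerivAt (by simp)).eq _ _

end Aux

/-- if `u` is a `C³` convex function with positive definite Hessian
solving `det D²u = c` for a positive constant `c` on an open set, `(Uᵢⱼ)` is the
cofactor matrix of `D²u` (so `U · D²u = det(D²u) · Id`), and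
`w = ∂₁u + K(u − (n/2)x₁∂₁u)`, then `Σᵢⱼ Uᵢⱼ ∂ᵢ∂ⱼ w = 0`.  (The space is `ℝ^{n+1}`,
`e₁` is the coordinate direction indexed by `0`.) -/
theorem statement14 {n : ℕ} (O : Set (EuclideanSpace ℝ (Fin (n + 1))))
    (hO : IsOpen O) (hOc : Convex ℝ O)
    (u : EuclideanSpace ℝ (Fin (n + 1)) → ℝ)
    (hu : ContDiffOn ℝ 3 u O) (hconv : ConvexOn ℝ O u)
    (hpos : ∀ x ∈ O, (hessMatrix u x).PosDef)
    (c : ℝ) (hc : 0 < c)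
    (hdet : ∀ x ∈ O, (hessMatrix u x).det = c)
    (U : EuclideanSpace ℝ (Fin (n + 1)) → Matrix (Fin (n + 1)) (Fin (n + 1)) ℝ)
    (hU : ∀ x ∈ O, U x * hessMatrix u x =
      (hessMatrix u x).det • (1 : Matrix (Fin (n + 1)) (Fin (n + 1)) ℝ))
    (K : ℝ) (w : EuclideanSpace ℝ (Fin (n + 1)) → ℝ)
    (hw : ∀ x, w x = pd 0 u x + K * (u x - ((n + 1 : ℝ) / 2) * x 0 * pd 0 u x)) :
    ∀ x ∈ O, ∑ i, ∑ j, U x i j * pd i (pd j w) x = 0 := by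
  classical
  intro x hx
  have hnhds : O ∈ 𝓝 x := hO.mem_nhds hx
  have hCA : ∀ y ∈ O, ContDiffAt ℝ 3 u y := fun y hy => (hu y hy).contDiffAt (hO.mem_nhds hy)
  set C : ℝ := (n + 1 : ℝ) / 2 with hCdef
  set g : EuclideanSpace ℝ (Fin (n + 1)) → ℝ := pd 0 u with hgdef
  -- regularity of the various derivatives
  have hg2 : ∀ y ∈ O, ContDiffAt ℝ 2 g y := fun y hy =>
    contDiffAt_pd (hCA y hy) (by norm_num) 0
  have hpdu2 : ∀ (j : Fin (n + 1)), ∀ y ∈ O, ContDiffAt ℝ 2 (pd j u) y := fun j y hy =>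
    contDiffAt_pd (hCA y hy) (by norm_num) j
  have hpdg1 : ∀ j : Fin (n + 1), ContDiffAt ℝ 1 (pd j g) x := fun j =>
    contDiffAt_pd (hg2 x hx) (by norm_num) j
  have hHC1 : ∀ i j : Fin (n + 1), ContDiffAt ℝ 1 (pd i (pd j u)) x := fun i j =>
    contDiffAt_pd (hpdu2 j x hx) (by norm_num) i
  -- symmetry of second partials on O
  have hsymm : ∀ y ∈ O, ∀ i j : Fin (n + 1), pd i (pd j u) y = pd j (pd i u) y :=
    fun y hy i j => pd_comm ((hCA y hy).of_le (by norm_num)) i j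
  -- the coordinate projection
  have hproj : ∀ y : EuclideanSpace ℝ (Fin (n + 1)),
      HasFDerivAt (fun z : EuclideanSpace ℝ (Fin (n + 1)) => z 0)
        (EuclideanSpace.proj (𝕜 := ℝ) (0 : Fin (n + 1))) y := by
    intro y
    have := (EuclideanSpace.proj (𝕜 := ℝ) (0 : Fin (n + 1))).hasFDerivAt (x := y)
    convert this using 1
    funext z; rfl
  have hps : ∀ j : Fin (n + 1),
      (EuclideanSpace.proj (𝕜 := ℝ) (0 : Fin (n + 1))) (EuclideanSpace.single j (1:ℝ))
        = (if (0 : Fin (n + 1)) = j then (1:ℝ) else 0) := by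
    intro j
    rw [show (EuclideanSpace.proj (𝕜 := ℝ) (0 : Fin (n + 1))) (EuclideanSpace.single j (1:ℝ))
        = (EuclideanSpace.single j (1:ℝ)) 0 from rfl, EuclideanSpace.single_apply]
  -- the function w
  have hwdef : w = fun y => g y + K * (u y - C * y 0 * g y) := funext hw
  -- first derivative of w on O
  have hpdw : ∀ (j : Fin (n + 1)), ∀ y ∈ O, pd j w y
      = pd j g y + K * (pd j u y - ((C * y 0) * pd j g y
          + g y * (C * (if (0 : Fin (n + 1)) = j then (1:ℝ) else 0)))) := by
    intro j y hy
    have hgy : HasFDerivAt g (fderiv ℝ g y) y :=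
      ((hg2 y hy).differentiableAt (by norm_num)).hasFDerivAt
    have huy : HasFDerivAt u (fderiv ℝ u y) y :=
      ((hCA y hy).differentiableAt (by norm_num)).hasFDerivAt
    have hq : HasFDerivAt (fun z : EuclideanSpace ℝ (Fin (n + 1)) => C * z 0 * g z)
        ((C * y 0) • fderiv ℝ g y
          + g y • (C • (EuclideanSpace.proj (𝕜 := ℝ) (0 : Fin (n + 1))))) y :=
      ((hproj y).const_mul C).mul hgy
    have hwy : HasFDerivAt w
        (fderiv ℝ g y + K • ((fderiv ℝ u y) - ((C * y 0) • fderiv ℝ g y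
          + g y • (C • (EuclideanSpace.proj (𝕜 := ℝ) (0 : Fin (n + 1))))))) y := by
      rw [hwdef]
      exact hgy.add ((huy.sub hq).const_mul K)
    rw [hwy.pd_eq j]
    simp only [ContinuousLinearMap.add_apply, ContinuousLinearMap.smul_apply,
      ContinuousLinearMap.coe_smul', Pi.smul_apply, ContinuousLinearMap.sub_apply,
      smul_eq_mul]
    rw [hps j]
    rfl
  -- second derivatives of w at x
  have hsecond : ∀ i j : Fin (n + 1), pd i (pd j w) x
      = pd i (pd j g) x + K * (pd i (pd j u) x
          - ((C * (if (0 : Fin (n + 1)) = i then (1:ℝ) else 0)) * pd j g x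
            + (C * x 0) * pd i (pd j g) x
            + (C * (if (0 : Fin (n + 1)) = j then (1:ℝ) else 0)) * pd i g x)) := by
    intro i j
    set δ : ℝ := (if (0 : Fin (n + 1)) = j then (1:ℝ) else 0) with hδ
    have hcongr : pd j w =ᶠ[𝓝 x] fun y =>
        pd j g y + K * (pd j u y - ((C * y 0) * pd j g y + g y * (C * δ))) :=
      eventually_of_mem hnhds (fun y hy => hpdw j y hy)
    rw [pd_congr hcongr]
    have h1 : HasFDerivAt (pd j g) (fderiv ℝ (pd j g) x) x :=
      ((hpdg1 j).differentiableAt one_ne_zero).hasFDerivAt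
    have h2 : HasFDerivAt (pd j u) (fderiv ℝ (pd j u) x) x :=
      (((hpdu2 j x hx)).differentiableAt (by norm_num)).hasFDerivAt
    have h4 : HasFDerivAt g (fderiv ℝ g x) x :=
      ((hg2 x hx).differentiableAt (by norm_num)).hasFDerivAt
    have hq : HasFDerivAt (fun z : EuclideanSpace ℝ (Fin (n + 1)) => (C * z 0) * pd j g z)
        ((C * x 0) • fderiv ℝ (pd j g) x
          + pd j g x • (C • (EuclideanSpace.proj (𝕜 := ℝ) (0 : Fin (n + 1))))) x :=
      ((hproj x).const_mul C).mul h1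
    have hr : HasFDerivAt (fun z : EuclideanSpace ℝ (Fin (n + 1)) => g z * (C * δ))
        ((C * δ) • fderiv ℝ g x) x := h4.mul_const (C * δ)
    have hF : HasFDerivAt (fun y : EuclideanSpace ℝ (Fin (n + 1)) =>
        pd j g y + K * (pd j u y - ((C * y 0) * pd j g y + g y * (C * δ))))
        (fderiv ℝ (pd j g) x + K • ((fderiv ℝ (pd j u) x)
          - (((C * x 0) • fderiv ℝ (pd j g) x
            + pd j g x • (C • (EuclideanSpace.proj (𝕜 := ℝ) (0 : Fin (n + 1)))))
            + (C * δ) • fderiv ℝ g x))) x :=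
      h1.add ((h2.sub (hq.add hr)).const_mul K)
    rw [hF.pd_eq i]
    simp only [ContinuousLinearMap.add_apply, ContinuousLinearMap.smul_apply,
      ContinuousLinearMap.coe_smul', Pi.smul_apply, ContinuousLinearMap.sub_apply,
      smul_eq_mul]
    rw [hps i]
    have e1 : fderiv ℝ (pd j g) x (EuclideanSpace.single i 1) = pd i (pd j g) x := rfl
    have e2 : fderiv ℝ (pd j u) x (EuclideanSpace.single i 1) = pd i (pd j u) x := rfl
    have e3 : fderiv ℝ g x (EuclideanSpace.single i 1) = pd i g x := rfl
    rw [e1, e2, e3]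
    ring
  -- the Hessian is invertible and U is its adjugate
  have hdu : IsUnit (hessMatrix u x).det := by
    rw [hdet x hx]; exact (isUnit_iff_ne_zero.2 hc.ne')
  have hUadj : U x = (hessMatrix u x).adjugate := by
    have h1 := hU x hx
    have h2 := Matrix.adjugate_mul (hessMatrix u x)
    calc U x = U x * hessMatrix u x * (hessMatrix u x)⁻¹ :=
          (Matrix.mul_nonsing_inv_cancel_right _ _ hdu).symm
      _ = (hessMatrix u x).adjugate * hessMatrix u x * (hessMatrix u x)⁻¹ := by rw [h1, h2]
      _ = (hessMatrix u x).adjugate := Matrix.mul_nonsing_inv_cancel_right _ _ hdu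
  have hUH : U x * hessMatrix u x = c • (1 : Matrix (Fin (n + 1)) (Fin (n + 1)) ℝ) := by
    rw [hU x hx, hdet x hx]
  have hHU : hessMatrix u x * U x = c • (1 : Matrix (Fin (n + 1)) (Fin (n + 1)) ℝ) := by
    rw [hUadj, Matrix.mul_adjugate, hdet x hx]
  -- third-derivative commutation:  ∂ᵢ∂ⱼ g = ∂₀ (Hessian entry i j)
  have hthird : ∀ i j : Fin (n + 1),
      pd i (pd j g) x = pd 0 (pd i (pd j u)) x := by
    intro i j
    have hstep1 : pd j g =ᶠ[𝓝 x] pd 0 (pd j u) :=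
      eventually_of_mem hnhds (fun y hy =>
        pd_comm ((hCA y hy).of_le (by norm_num)) j 0)
    rw [pd_congr (i := i) hstep1]
    exact pd_comm (hpdu2 j x hx) i 0
  -- Jacobi:  ∑ᵢⱼ Uᵢⱼ ∂ᵢ∂ⱼ g = 0
  have hS3 : ∑ i, ∑ j, U x i j * pd i (pd j g) x = 0 := by
    have hA : ∀ i j : Fin (n + 1),
        DifferentiableAt ℝ (fun y => hessMatrix u y i j) x :=
      fun i j => (hHC1 i j).differentiableAt one_ne_zero
    have hconst : (fun y => (hessMatrix u y).det) =ᶠ[𝓝 x] fun _ => c :=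
      eventually_of_mem hnhds (fun y hy => hdet y hy)
    have hjac := jacobi_zero hA hconst (EuclideanSpace.single (0 : Fin (n + 1)) 1)
    -- rewrite the Jacobi sum into our sum
    have hfd : ∀ i j : Fin (n + 1),
        fderiv ℝ (fun y => hessMatrix u y i j) x (EuclideanSpace.single (0 : Fin (n+1)) 1)
          = pd 0 (pd i (pd j u)) x := fun i j => rfl
    have hdsymm : ∀ i j : Fin (n + 1),
        pd 0 (pd i (pd j u)) x = pd 0 (pd j (pd i u)) x := by
      intro i j
      exact pd_congr (eventually_of_mem hnhds (fun y hy => hsymm y hy i j))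
    calc ∑ i, ∑ j, U x i j * pd i (pd j g) x
        = ∑ i, ∑ j, (hessMatrix u x).adjugate i j * pd 0 (pd i (pd j u)) x := by
          refine Finset.sum_congr rfl fun i _ => Finset.sum_congr rfl fun j _ => ?_
          rw [hUadj, hthird i j]
      _ = ∑ i, ∑ j, (hessMatrix u x).adjugate j i * pd 0 (pd i (pd j u)) x := by
          rw [Finset.sum_comm]
          refine Finset.sum_congr rfl fun i _ => Finset.sum_congr rfl fun j _ => ?_
          rw [hdsymm j i]
      _ = ∑ i, ∑ j, (hessMatrix u x).adjugate j i
            * fderiv ℝ (fun y => hessMatrix u y i j) x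
                (EuclideanSpace.single (0 : Fin (n+1)) 1) := by
          refine Finset.sum_congr rfl fun i _ => Finset.sum_congr rfl fun j _ => ?_
          rw [hfd i j]
      _ = 0 := hjac
  -- trace term:  ∑ᵢⱼ Uᵢⱼ ∂ᵢ∂ⱼ u = (n+1) c
  have hT : ∑ i, ∑ j, U x i j * pd i (pd j u) x = (n + 1 : ℝ) * c := by
    have : ∀ i : Fin (n + 1), ∑ j, U x i j * pd i (pd j u) x = c := by
      intro i
      have h1 : ∑ j, U x i j * pd i (pd j u) x = ∑ j, U x i j * hessMatrix u x j i := by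
        refine Finset.sum_congr rfl fun j _ => ?_
        have : hessMatrix u x j i = pd i (pd j u) x := (hsymm x hx j i)
        rw [this]
      rw [h1, ← Matrix.mul_apply, hUH]
      simp [Matrix.one_apply]
    rw [Finset.sum_congr rfl fun i _ => this i, Finset.sum_const, Finset.card_univ]
    simp [nsmul_eq_mul]
  -- the two cross terms
  have hA0 : ∑ j, U x 0 j * pd j g x = c := by
    have h1 : ∀ j : Fin (n + 1), pd j g x = hessMatrix u x j 0 := fun j => rfl
    rw [Finset.sum_congr rfl fun j _ => by rw [h1 j]]
    rw [← Matrix.mul_apply, hUH]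
    simp [Matrix.one_apply]
  have hB0 : ∑ i, U x i 0 * pd i g x = c := by
    have h1 : ∀ i : Fin (n + 1), pd i g x = hessMatrix u x 0 i := fun i => hsymm x hx i 0
    calc ∑ i, U x i 0 * pd i g x = ∑ i, hessMatrix u x 0 i * U x i 0 := by
          refine Finset.sum_congr rfl fun i _ => ?_
          rw [h1 i]; ring
      _ = (hessMatrix u x * U x) 0 0 := (Matrix.mul_apply).symm
      _ = c := by rw [hHU]; simp [Matrix.one_apply]
  -- expand and conclude
  have expand : ∀ i j : Fin (n + 1), U x i j * pd i (pd j w) x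
      = U x i j * pd i (pd j g) x + K * (U x i j * pd i (pd j u) x)
        - (K * C) * (U x i j * ((if (0 : Fin (n + 1)) = i then (1:ℝ) else 0) * pd j g x))
        - (K * C * x 0) * (U x i j * pd i (pd j g) x)
        - (K * C) * (U x i j * ((if (0 : Fin (n + 1)) = j then (1:ℝ) else 0) * pd i g x)) := by
    intro i j
    rw [hsecond i j]; ring
  rw [Finset.sum_congr rfl fun i _ => Finset.sum_congr rfl fun j _ => expand i j]
  simp only [Finset.sum_sub_distrib, Finset.sum_add_distrib, ← Finset.mul_sum]
  have hAsum : ∑ i, ∑ j, U x i j * ((if (0 : Fin (n + 1)) = i then (1:ℝ) else 0) * pd j g x)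
      = c := by
    have : ∀ i : Fin (n + 1), ∑ j, U x i j * ((if (0 : Fin (n + 1)) = i then (1:ℝ) else 0)
        * pd j g x) = if (0 : Fin (n + 1)) = i then ∑ j, U x i j * pd j g x else 0 := by
      intro i
      split <;> simp
    rw [Finset.sum_congr rfl fun i _ => this i, Finset.sum_ite_eq]
    simp [hA0]
  have hBsum : ∑ i, ∑ j, U x i j * ((if (0 : Fin (n + 1)) = j then (1:ℝ) else 0) * pd i g x)
      = c := by
    have : ∀ i : Fin (n + 1), ∑ j, U x i j * ((if (0 : Fin (n + 1)) = j then (1:ℝ) else 0)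
        * pd i g x) = U x i 0 * pd i g x := by
      intro i
      rw [Finset.sum_eq_single (0 : Fin (n + 1))]
      · simp
      · intro b _ hb
        simp [Ne.symm hb]
      · simp
    rw [Finset.sum_congr rfl fun i _ => this i, hB0]
  rw [hS3, hT, hAsum, hBsum]
  rw [hCdef]
  ring
end
end
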